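/- Let f₁, f₂ : S¹ → [−π/2, π/2] be continuous functions with f₁(z) < f₂(z) for all z, both symmetric (fᵢ(z̄) = fᵢ(z)). Then there exists a palindromic Laurent polynomial γ ∈ ℝ[t,t⁻¹] with tan(f₁(z)) < γ(z) < tan(f₂(z)) for all z ∈ S¹ at which both f₁(z) > −π/2 and f₂(z) < π/2, and more generally arctan applied to the sandwich holds: f₁(z) < arctan(γ(z)) < f₂(z) for all z ∈ S¹. -/

import Mathlib

open LaurentPolynomial Real

noncomputable def lEval (p : LaurentPolynomial ℝ) (z : ℂ) : ℂ :=
  Finsupp.sum (AddMonoidAlgebra.coeff p) fun n a => (a : ℂ) * z ^ n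

def Palindromic (p : LaurentPolynomial ℝ) : Prop := invert p = p

/-- Complex conjugation as a map of the unit circle. -/
noncomputable def sphereConj (z : Metric.sphere (0 : ℂ) 1) : Metric.sphere (0 : ℂ) 1 :=
  ⟨starRingEnd ℂ z, by
    have := z.2
    simp only [mem_sphere_zero_iff_norm] at this ⊢
    simp [this]⟩

/-- Evaluation of a Laurent polynomial at a nonzero complex number, as an algebra hom. -/
noncomputable def lEvalHom (z : ℂ) (hz : z ≠ 0) : LaurentPolynomial ℝ →ₐ[ℝ] ℂ :=
  AddMonoidAlgebra.lift ℝ ℂ ℤ ((Units.coeHom ℂ).comp (zpowersHom ℂˣ (Units.mk0 z hz)))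

lemma lEvalHom_apply (z : ℂ) (hz : z ≠ 0) (p : LaurentPolynomial ℝ) :
    lEvalHom z hz p = lEval p z := by
  rw [lEvalHom, AddMonoidAlgebra.lift_apply]
  unfold lEval
  refine Finsupp.sum_congr fun n _ => ?_
  simp [Algebra.smul_def, Units.val_zpow_eq_zpow_val]

lemma lipschitz_arctan : LipschitzWith 1 Real.arctan := by
  apply lipschitzWith_of_nnnorm_deriv_le differentiable_arctan
  intro x
  rw [Real.deriv_arctan]
  rw [← NNReal.coe_le_coe]
  simp only [coe_nnnorm, NNReal.coe_one, Real.norm_eq_abs]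
  rw [abs_of_pos (by positivity)]
  rw [div_le_one (by positivity)]
  nlinarith [sq_nonneg x]

lemma abs_arctan_sub_le (a b : ℝ) : |Real.arctan a - Real.arctan b| ≤ |a - b| := by
  have := lipschitz_arctan.dist_le_mul a b
  simpa [Real.dist_eq] using this

theorem exists_palindromic_between
    (f₁ f₂ : C(Metric.sphere (0 : ℂ) 1, ℝ))
    (hrange : ∀ z, f₁ z ∈ Set.Icc (-(π / 2)) (π / 2) ∧ f₂ z ∈ Set.Icc (-(π / 2)) (π / 2))
    (hlt : ∀ z, f₁ z < f₂ z)
    (hsym₁ : ∀ z, f₁ (sphereConj z) = f₁ z)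
    (hsym₂ : ∀ z, f₂ (sphereConj z) = f₂ z) :
    ∃ γ : LaurentPolynomial ℝ, Palindromic γ ∧
      (∀ z : Metric.sphere (0 : ℂ) 1,
        f₁ z < Real.arctan ((lEval γ z).re) ∧ Real.arctan ((lEval γ z).re) < f₂ z) ∧
      (∀ z : Metric.sphere (0 : ℂ) 1, -(π / 2) < f₁ z → f₂ z < π / 2 →
        Real.tan (f₁ z) < (lEval γ z).re ∧ (lEval γ z).re < Real.tan (f₂ z)) := by
  classical
  haveI : Nonempty (Metric.sphere (0 : ℂ) 1) := ⟨⟨1, by simp⟩⟩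
  -- the midpoint function
  set m : C(Metric.sphere (0 : ℂ) 1, ℝ) := (2⁻¹ : ℝ) • (f₁ + f₂) with hm
  have hm_apply : ∀ z, m z = (f₁ z + f₂ z) / 2 := by
    intro z; simp [hm]; ring
  have hm₁ : ∀ z, f₁ z < m z := by intro z; rw [hm_apply]; linarith [hlt z]
  have hm₂ : ∀ z, m z < f₂ z := by intro z; rw [hm_apply]; linarith [hlt z]
  have hmIoo : ∀ z, m z ∈ Set.Ioo (-(π / 2)) (π / 2) := by
    intro z
    obtain ⟨h1, h2⟩ := hrange z
    exact ⟨lt_of_le_of_lt h1.1 (hm₁ z), lt_of_lt_of_le (hm₂ z) h2.2⟩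
  have hmsym : ∀ z, m (sphereConj z) = m z := by
    intro z; rw [hm_apply, hm_apply, hsym₁, hsym₂]
  -- continuity of tan ∘ m
  have htm : Continuous fun z : Metric.sphere (0 : ℂ) 1 => Real.tan (m z) := by
    rw [continuous_iff_continuousAt]
    intro z
    have hcos : Real.cos (m z) ≠ 0 :=
      (Real.cos_pos_of_mem_Ioo (hmIoo z)).ne'
    exact (Real.continuousAt_tan.2 hcos).comp m.continuous.continuousAt
  -- minimum gap
  obtain ⟨z₀, -, hz₀⟩ := isCompact_univ.exists_isMinOn (Set.univ_nonempty)
    ((f₂ - f₁).continuous.continuousOn (s := Set.univ))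
  set ε : ℝ := (f₂ z₀ - f₁ z₀) / 2 with hε
  have hεpos : 0 < ε := by have := hlt z₀; simp only [hε]; linarith
  have hεle : ∀ z, ε ≤ m z - f₁ z ∧ ε ≤ f₂ z - m z := by
    intro z
    have h := isMinOn_iff.mp hz₀ z (Set.mem_univ z)
    simp only [ContinuousMap.sub_apply] at h
    rw [hm_apply]
    constructor <;> simp only [hε] <;> linarith
  -- the parametrization of the upper half circle by [-1,1]
  set c : Set.Icc (-1 : ℝ) 1 → Metric.sphere (0 : ℂ) 1 := fun x =>
    ⟨(x : ℝ) + Complex.I * Real.sqrt (1 - (x : ℝ) ^ 2), by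
      have hx2 : (x : ℝ) ^ 2 ≤ 1 := by
        have := x.2
        rw [Set.mem_Icc] at this
        nlinarith [this.1, this.2]
      rw [mem_sphere_zero_iff_norm]
      have hre : ((x : ℝ) + Complex.I * Real.sqrt (1 - (x : ℝ) ^ 2)).re = (x : ℝ) := by simp
      have him : ((x : ℝ) + Complex.I * Real.sqrt (1 - (x : ℝ) ^ 2)).im =
          Real.sqrt (1 - (x : ℝ) ^ 2) := by simp
      rw [Complex.norm_def, Complex.normSq_apply, hre, him,
        Real.mul_self_sqrt (by linarith : (0:ℝ) ≤ 1 - (x : ℝ) ^ 2),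
        show (x : ℝ) * (x : ℝ) + (1 - (x : ℝ) ^ 2) = 1 by ring, Real.sqrt_one]⟩ with hc
  have hcont_c : Continuous c := by
    rw [hc]
    apply Continuous.subtype_mk
    fun_prop
  -- approximate tan ∘ m ∘ c by a polynomial
  set φ : C(Set.Icc (-1 : ℝ) 1, ℝ) :=
    ⟨fun x => Real.tan (m (c x)), htm.comp hcont_c⟩ with hφ
  obtain ⟨q, hq⟩ := exists_polynomial_near_continuousMap (-1) 1 φ ε hεpos
  rw [ContinuousMap.norm_lt_iff _ hεpos] at hq
  -- key estimate on the whole circle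
  have key : ∀ z : Metric.sphere (0 : ℂ) 1,
      |q.eval (z : ℂ).re - Real.tan (m z)| < ε := by
    intro z
    have hz1 : ‖(z : ℂ)‖ = 1 := by
      have := z.2
      rwa [mem_sphere_zero_iff_norm] at this
    have hxmem : (z : ℂ).re ∈ Set.Icc (-1 : ℝ) 1 := by
      have := Complex.abs_re_le_norm (z : ℂ)
      rw [hz1] at this
      exact abs_le.1 this
    set x : Set.Icc (-1 : ℝ) 1 := ⟨(z : ℂ).re, hxmem⟩ with hx
    have hsq : (z : ℂ).re ^ 2 + (z : ℂ).im ^ 2 = 1 := by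
      have h2 := Complex.normSq_apply (z : ℂ)
      rw [Complex.normSq_eq_norm_sq, hz1] at h2
      nlinarith [h2]
    have hsqrt : Real.sqrt (1 - (z : ℂ).re ^ 2) = |(z : ℂ).im| := by
      rw [show (1 : ℝ) - (z : ℂ).re ^ 2 = (z : ℂ).im ^ 2 by linarith]
      exact Real.sqrt_sq_eq_abs _
    have hmz : m (c x) = m z := by
      rcases le_or_gt 0 (z : ℂ).im with him | him
      · have : c x = z := by
          apply Subtype.ext
          apply Complex.ext <;> simp [hc, hx, hsqrt, abs_of_nonneg him]
        rw [this]
      · have : sphereConj (c x) = z := by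
          apply Subtype.ext
          apply Complex.ext
          · simp [sphereConj, hc, hx]
          · simp [sphereConj, hc, hx, hsqrt, abs_of_neg him]
        rw [← this, hmsym]
      
    have := hq x
    simp only [ContinuousMap.sub_apply, Polynomial.toContinuousMapOn_apply,
      Polynomial.toContinuousMap_apply, hφ, ContinuousMap.coe_mk] at this
    rw [hmz] at this
    simpa [Real.norm_eq_abs] using this
  -- build the Laurent polynomial
  set w : LaurentPolynomial ℝ := C (2⁻¹ : ℝ) * (T 1 + T (-1)) with hw
  set γ : LaurentPolynomial ℝ := Polynomial.aeval w q with hγ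
  have hwinv : invert w = w := by
    rw [hw]
    simp only [map_mul, map_add, invert_T, invert_C]
    ring_nf
  have hγpal : Palindromic γ := by
    have h := Polynomial.aeval_algHom_apply
      (invert : LaurentPolynomial ℝ ≃ₐ[ℝ] LaurentPolynomial ℝ) w q
    rw [Palindromic, hγ, ← h, hwinv]
  -- evaluation of γ on the circle
  have heval : ∀ z : Metric.sphere (0 : ℂ) 1, lEval γ z = ((q.eval (z : ℂ).re : ℝ) : ℂ) := by
    intro z
    have hz1 : ‖(z : ℂ)‖ = 1 := by
      have := z.2
      rwa [mem_sphere_zero_iff_norm] at this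
    have hz0 : (z : ℂ) ≠ 0 := by
      intro h; rw [h] at hz1; simp at hz1
    rw [← lEvalHom_apply _ hz0, hγ, ← Polynomial.aeval_algHom_apply (lEvalHom (z : ℂ) hz0) w q]
    have hTeval : ∀ n : ℤ, lEvalHom (z : ℂ) hz0 (T n) = (z : ℂ) ^ n := by
      intro n
      rw [lEvalHom_apply]
      unfold lEval
      rw [show AddMonoidAlgebra.coeff (T n : LaurentPolynomial ℝ) = Finsupp.single n 1 from rfl, Finsupp.sum_single_index] <;> simp
    have hCeval : lEvalHom (z : ℂ) hz0 (C (2⁻¹ : ℝ)) = (2⁻¹ : ℂ) := by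
      rw [C_eq_algebraMap, AlgHom.commutes]
      simp [Complex.ofReal_inv]
    have hweval : lEvalHom (z : ℂ) hz0 w = ((z : ℂ).re : ℂ) := by
      rw [hw, map_mul, map_add, hCeval, hTeval, hTeval]
      have hinv : (z : ℂ) ^ (-1 : ℤ) = (starRingEnd ℂ) (z : ℂ) := by
        rw [zpow_neg, zpow_one, Complex.inv_def]
        rw [Complex.normSq_eq_norm_sq, hz1]
        simp
      rw [zpow_one, hinv, Complex.add_conj]
      push_cast
      ring
    rw [hweval, show ((z : ℂ).re : ℂ) = algebraMap ℝ ℂ (z : ℂ).re from rfl,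
      Polynomial.aeval_algebraMap_apply_eq_algebraMap_eval]
    rfl
  -- conclude
  refine ⟨γ, hγpal, ?_, ?_⟩
  · intro z
    have hv : (lEval γ z).re = q.eval (z : ℂ).re := by rw [heval]; simp
    set v : ℝ := (lEval γ z).re with hvdef
    have hkey : |v - Real.tan (m z)| < ε := by rw [hv]; exact key z
    have harctan : |Real.arctan v - m z| < ε := by
      have h1 := abs_arctan_sub_le v (Real.tan (m z))
      rw [Real.arctan_tan (hmIoo z).1 (hmIoo z).2] at h1
      exact lt_of_le_of_lt h1 hkey
    obtain ⟨he1, he2⟩ := hεle z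
    rw [abs_lt] at harctan
    constructor <;> linarith [harctan.1, harctan.2]
  · intro z h1 h2
    have hv : (lEval γ z).re = q.eval (z : ℂ).re := by rw [heval]; simp
    set v : ℝ := (lEval γ z).re with hvdef
    have hkey : |v - Real.tan (m z)| < ε := by rw [hv]; exact key z
    have harctan : |Real.arctan v - m z| < ε := by
      have hh := abs_arctan_sub_le v (Real.tan (m z))
      rw [Real.arctan_tan (hmIoo z).1 (hmIoo z).2] at hh
      exact lt_of_le_of_lt hh hkey
    obtain ⟨he1, he2⟩ := hεle z
    rw [abs_lt] at harctan
    have hl : f₁ z < Real.arctan v := by linarith [harctan.1]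
    have hr : Real.arctan v < f₂ z := by linarith [harctan.2]
    constructor
    · have := Real.tan_lt_tan_of_lt_of_lt_pi_div_two h1
        (Real.arctan_lt_pi_div_two v) hl
      rwa [Real.tan_arctan] at this
    · have := Real.tan_lt_tan_of_lt_of_lt_pi_div_two
        (Real.neg_pi_div_two_lt_arctan v) h2 hr
      rwa [Real.tan_arctan] at this
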